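/- Let V be an HN datum and μ ∈ ℚ. Then δ(V, V) − δ(V^{≥μ}, V^{≥μ}) − δ(V^{<μ}, V^{<μ}) equals the cross product of the total vector (rk(V^{<μ}), deg(V^{<μ})) with the total vector (rk(V^{≥μ}), deg(V^{≥μ})). In particular δ(V^{≥μ}, V^{≥μ}) + δ(V^{<μ}, V^{<μ}) ≤ δ(V, V), with equality if and only if V^{≥μ} is empty or V^{<μ} is empty. -/
import Mathlib

namespace HN

def slope (v : ℤ × ℤ) : ℚ := (v.2 : ℚ) / (v.1 : ℚ)

def cross (v w : ℤ × ℤ) : ℤ := v.1 * w.2 - v.2 * w.1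

def IsHNDatum (E : List (ℤ × ℤ)) : Prop :=
  (∀ v ∈ E, 1 ≤ v.1) ∧ E.Pairwise (fun v w => slope w < slope v)

def rk (E : List (ℤ × ℤ)) : ℤ := (E.map Prod.fst).sum

def deg (E : List (ℤ × ℤ)) : ℤ := (E.map Prod.snd).sum

def delta (E F : List (ℤ × ℤ)) : ℤ :=
  (E.map fun e => ((F.filter fun f => decide (slope e ≤ slope f)).map fun f => cross e f).sum).sum

def geSlope (E : List (ℤ × ℤ)) (μ : ℚ) : List (ℤ × ℤ) := E.filter fun v => decide (μ ≤ slope v)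
def gtSlope (E : List (ℤ × ℤ)) (μ : ℚ) : List (ℤ × ℤ) := E.filter fun v => decide (μ < slope v)
def ltSlope (E : List (ℤ × ℤ)) (μ : ℚ) : List (ℤ × ℤ) := E.filter fun v => decide (slope v < μ)


def sigmaList (E : List (ℤ × ℤ)) : List ℚ :=
  E.flatMap fun v => List.replicate v.1.toNat (slope v)

def sigmaSlope (E : List (ℤ × ℤ)) (i : ℕ) : ℚ := (sigmaList E).getD (i - 1) 0

def poly (E : List (ℤ × ℤ)) (k : ℕ) : ℚ := ((sigmaList E).take k).sum

def polySum (A B : List (ℤ × ℤ)) (k : ℕ) : ℚ :=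
  (((sigmaList A ++ sigmaList B).mergeSort fun a b => decide (b ≤ a)).take k).sum

def SlopewiseDom (E F : List (ℤ × ℤ)) : Prop :=
  ∀ μ : ℚ, rk (geSlope F μ) ≤ rk (geSlope E μ)

def StrongSlopewiseDom (E F : List (ℤ × ℤ)) : Prop :=
  SlopewiseDom E F ∧ ∀ μ : ℚ, rk (geSlope E μ) = rk (geSlope F μ) → geSlope E μ = geSlope F μ

def dual (E : List (ℤ × ℤ)) : List (ℤ × ℤ) := (E.map fun v => (v.1, -v.2)).reverse

def HNleSum (E A B : List (ℤ × ℤ)) : Prop :=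
  rk E = rk A + rk B ∧ deg E = deg A + deg B ∧
    ∀ k : ℕ, (k : ℤ) ≤ rk E → poly E k ≤ polySum A B k

def HasVertex (V : List (ℤ × ℤ)) (j : ℕ) : Prop :=
  (j : ℤ) = rk V ∨ sigmaSlope V (j + 1) < sigmaSlope V j

-- auxiliary lemmas

private lemma sum_map_ite (F : List (ℤ × ℤ)) (e : ℤ × ℤ) :
    ((F.filter fun f => decide (slope e ≤ slope f)).map fun f => cross e f).sum =
      (F.map fun f => if slope e ≤ slope f then cross e f else 0).sum := by
  induction F with
  | nil => simp
  | cons a t ih =>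
    by_cases h : slope e ≤ slope a <;> simp [List.filter_cons, h, ih]

private lemma delta_eq (E F : List (ℤ × ℤ)) :
    delta E F = (E.map fun e =>
      (F.map fun f => if slope e ≤ slope f then cross e f else 0).sum).sum := by
  unfold delta
  congr 1
  exact List.map_congr_left fun e _ => sum_map_ite F e

private lemma lt_eq_not (V : List (ℤ × ℤ)) (μ : ℚ) :
    ltSlope V μ = V.filter (fun v => !decide (μ ≤ slope v)) := by
  unfold ltSlope
  refine List.filter_congr fun v _ => ?_
  rw [← decide_not]
  exact decide_eq_decide.mpr not_le.symm

private lemma sum_split (V : List (ℤ × ℤ)) (μ : ℚ) (g : ℤ × ℤ → ℤ) :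
    (V.map g).sum = ((geSlope V μ).map g).sum + ((ltSlope V μ).map g).sum := by
  rw [lt_eq_not]
  have h := (List.filter_append_perm (fun v => decide (μ ≤ slope v)) V).map g |>.sum_eq
  rw [← h, List.map_append, List.sum_append]
  rfl

private lemma cross_sum (e : ℤ × ℤ) (A : List (ℤ × ℤ)) :
    (A.map fun f => cross e f).sum = cross e (rk A, deg A) := by
  induction A with
  | nil => simp [cross, rk, deg]
  | cons a t ih => simp [rk, deg, cross] at *; rw [ih]; ring

private lemma sum_cross (B : List (ℤ × ℤ)) (w : ℤ × ℤ) :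
    (B.map fun e => cross e w).sum = cross (rk B, deg B) w := by
  induction B with
  | nil => simp [cross, rk, deg]
  | cons a t ih => simp [rk, deg, cross] at *; rw [ih]; ring

private lemma mem_ge {V : List (ℤ × ℤ)} {μ : ℚ} {v : ℤ × ℤ} (h : v ∈ geSlope V μ) :
    μ ≤ slope v := by
  have := (List.mem_filter.mp h).2
  exact of_decide_eq_true this

private lemma mem_lt {V : List (ℤ × ℤ)} {μ : ℚ} {v : ℤ × ℤ} (h : v ∈ ltSlope V μ) :
    slope v < μ := by
  have := (List.mem_filter.mp h).2
  exact of_decide_eq_true this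

private lemma key (V : List (ℤ × ℤ)) (μ : ℚ) :
    delta V V = delta (geSlope V μ) (geSlope V μ) + delta (ltSlope V μ) (ltSlope V μ)
      + cross (rk (ltSlope V μ), deg (ltSlope V μ)) (rk (geSlope V μ), deg (geSlope V μ)) := by
  set A := geSlope V μ with hA
  set B := ltSlope V μ with hB
  rw [delta_eq, delta_eq, delta_eq]
  rw [sum_split V μ, ← hA, ← hB]
  have hAsum : (A.map fun e => (V.map fun f =>
      if slope e ≤ slope f then cross e f else 0).sum).sum
      = (A.map fun e => (A.map fun f =>
      if slope e ≤ slope f then cross e f else 0).sum).sum := by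
    refine congrArg _ (List.map_congr_left fun e he => ?_)
    rw [sum_split V μ, ← hA, ← hB]
    have hz : ((B.map fun f => if slope e ≤ slope f then cross e f else 0)).sum = 0 := by
      refine List.sum_eq_zero fun x hx => ?_
      obtain ⟨f, hf, rfl⟩ := List.mem_map.mp hx
      have : ¬ slope e ≤ slope f := not_le.mpr ((mem_lt hf).trans_le (mem_ge he))
      simp [this]
    rw [hz, add_zero]
  have hBsum : (B.map fun e => (V.map fun f =>
      if slope e ≤ slope f then cross e f else 0).sum).sum
      = (B.map fun e => (B.map fun f =>
      if slope e ≤ slope f then cross e f else 0).sum).sum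
      + cross (rk B, deg B) (rk A, deg A) := by
    rw [← sum_cross B (rk A, deg A)]
    rw [← List.sum_map_add]  -- maybe name wrong
    refine congrArg _ (List.map_congr_left fun e he => ?_)
    rw [sum_split V μ, ← hA, ← hB]
    have hone : ((A.map fun f => if slope e ≤ slope f then cross e f else 0)).sum
        = cross e (rk A, deg A) := by
      rw [← cross_sum e A]
      refine congrArg _ (List.map_congr_left fun f hf => ?_)
      have : slope e ≤ slope f := le_of_lt ((mem_lt he).trans_le (mem_ge hf))
      simp [this]
    rw [hone]
    ring
  rw [hAsum, hBsum]
  ring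


private lemma qrk (E : List (ℤ × ℤ)) : ((rk E : ℤ) : ℚ) = (E.map fun v => (v.1 : ℚ)).sum := by
  induction E with
  | nil => simp [rk]
  | cons a t ih => simp [rk] at *; exact ih

private lemma qdeg (E : List (ℤ × ℤ)) : ((deg E : ℤ) : ℚ) = (E.map fun v => (v.2 : ℚ)).sum := by
  induction E with
  | nil => simp [deg]
  | cons a t ih => simp [deg] at *; exact ih

/-- δ(V,V) − δ(V^{≥μ},V^{≥μ}) − δ(V^{<μ},V^{<μ}) is the cross product of the
total vectors of V^{<μ} and V^{≥μ}; in particular it is nonnegative, and it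
vanishes iff one of the two parts is empty. -/
theorem statement12 (V : List (ℤ × ℤ)) (hV : IsHNDatum V) (μ : ℚ) :
    delta V V - delta (geSlope V μ) (geSlope V μ) - delta (ltSlope V μ) (ltSlope V μ) =
        cross (rk (ltSlope V μ), deg (ltSlope V μ)) (rk (geSlope V μ), deg (geSlope V μ)) ∧
      delta (geSlope V μ) (geSlope V μ) + delta (ltSlope V μ) (ltSlope V μ) ≤ delta V V ∧
      (delta (geSlope V μ) (geSlope V μ) + delta (ltSlope V μ) (ltSlope V μ) = delta V V ↔
        geSlope V μ = [] ∨ ltSlope V μ = []) := by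
  set A := geSlope V μ with hA
  set B := ltSlope V μ with hB
  have hk := key V μ
  rw [← hA, ← hB] at hk
  have hr1 : ∀ v ∈ V, (0:ℚ) < (v.1 : ℚ) := by
    intro v hv
    have := hV.1 v hv
    exact_mod_cast lt_of_lt_of_le one_pos (by exact_mod_cast this)
  have hpos : A ≠ [] → B ≠ [] → 0 < cross (rk B, deg B) (rk A, deg A) := by
    intro hAne hBne
    have hsubA : ∀ v ∈ A, v ∈ V := fun v hv => List.mem_of_mem_filter hv
    have hsubB : ∀ v ∈ B, v ∈ V := fun v hv => List.mem_of_mem_filter hv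
    have hrA : (0:ℚ) < (rk A : ℚ) := by
      rw [qrk]
      refine List.sum_pos _ (fun x hx => ?_) (by simpa using hAne)
      obtain ⟨v, hv, rfl⟩ := List.mem_map.mp hx
      exact hr1 v (hsubA v hv)
    have hrB : (0:ℚ) < (rk B : ℚ) := by
      rw [qrk]
      refine List.sum_pos _ (fun x hx => ?_) (by simpa using hBne)
      obtain ⟨v, hv, rfl⟩ := List.mem_map.mp hx
      exact hr1 v (hsubB v hv)
    have hdA : μ * (rk A : ℚ) ≤ (deg A : ℚ) := by
      rw [qrk, qdeg]
      have : ((A.map fun v => μ * (v.1 : ℚ)).sum) ≤ (A.map fun v => (v.2 : ℚ)).sum := by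
        refine List.sum_le_sum fun v hv => ?_
        have h1 := hr1 v (hsubA v hv)
        have h2 : μ ≤ slope v := mem_ge hv
        rw [slope] at h2
        exact (le_div_iff₀ h1).mp h2
      calc μ * (A.map fun v => (v.1:ℚ)).sum = (A.map fun v => μ * (v.1:ℚ)).sum := by
            rw [← List.sum_map_mul_left]
        _ ≤ _ := this
    have hdB : (deg B : ℚ) < μ * (rk B : ℚ) := by
      rw [qrk, qdeg]
      obtain ⟨b, hb⟩ := List.exists_mem_of_ne_nil B hBne
      have hlt : ∀ v ∈ B, (v.2:ℚ) < μ * (v.1:ℚ) := by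
        intro v hv
        have h1 := hr1 v (hsubB v hv)
        have h2 : slope v < μ := mem_lt hv
        rw [slope] at h2
        have := (div_lt_iff₀ h1).mp h2
        linarith
      calc (B.map fun v => (v.2:ℚ)).sum < (B.map fun v => μ * (v.1:ℚ)).sum :=
            List.sum_lt_sum _ _ (fun v hv => le_of_lt (hlt v hv)) ⟨b, hb, hlt b hb⟩
        _ = μ * (B.map fun v => (v.1:ℚ)).sum := List.sum_map_mul_left ..
    have : (0:ℚ) < (rk B : ℚ) * (deg A : ℚ) - (deg B : ℚ) * (rk A : ℚ) := by
      nlinarith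
    have : (0:ℤ) < rk B * deg A - deg B * rk A := by exact_mod_cast this
    simpa [cross] using this
  have hzero : A = [] ∨ B = [] → cross (rk B, deg B) (rk A, deg A) = 0 := by
    rintro (h | h) <;> simp [h, cross, rk, deg]
  have hnn : 0 ≤ cross (rk B, deg B) (rk A, deg A) := by
    by_cases hAe : A = []
    · rw [hzero (Or.inl hAe)]
    · by_cases hBe : B = []
      · rw [hzero (Or.inr hBe)]
      · exact le_of_lt (hpos hAe hBe)
  refine ⟨by linarith, by linarith, ?_, fun h => by have := hzero h; linarith⟩
  intro heq
  by_contra hcon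
  push_neg at hcon
  have := hpos hcon.1 hcon.2
  linarith

end HN
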